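/- arXiv:2106.08584 — 3 statements merged into one kernel-verified Lean document; each statement's English description precedes it below -/
import Mathlib

section
/- Under the setup of the previous statement (with $\varphi$ additionally differentiable on $(0,\infty)$ with existing right derivative at $0$), for $y \in \mathbb{R}^n$ define $\tilde{\sigma}^y = \sigma - \ell(Ay-b) + \sum_{i=1}^p \omega_i^y(a_i^Ty-b_i)^2$ for a given $\sigma \in \mathbb{R}$. Then: (a) $\ell(Ay-b) - \sigma = \ell^y(Ay-b) - \tilde{\sigma}^y$; (b) $\nabla\ell(Ay-b) = \nabla\ell^y(Ay-b)$; and (c) for every $x \in \mathbb{R}^n$, $\ell(Ax-b) - \sigma \le \ell^y(Ax-b) - \tilde{\sigma}^y$. -/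
open Set Filter Topology

/-- Tangent-line majorization for a concave function via its right derivative. -/
lemma concave_tangent_le (φ : ℝ → ℝ) (hconc : ConcaveOn ℝ (Set.Ici 0) φ)
    (Dp : ℝ → ℝ) (hDp : ∀ t ≥ (0:ℝ), HasDerivWithinAt φ (Dp t) (Set.Ici t) t)
    {s t : ℝ} (hs : 0 ≤ s) (ht : 0 ≤ t) :
    φ s ≤ φ t + Dp t * (s - t) := by
  rcases lt_trichotomy s t with hlt | rfl | hgt
  · -- s < t : Dp t ≤ slope φ t s, with s - t < 0
    have tend : Tendsto (slope φ t) (𝓝[>] t) (𝓝 (Dp t)) := by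
      have := hasDerivWithinAt_iff_tendsto_slope.mp (hDp t ht)
      rwa [Set.Ici_sdiff_left] at this
    have hanti := hconc.slope_anti (x := t) ht
    have hev : ∀ᶠ u in 𝓝[>] t, slope φ t u ≤ slope φ t s := by
      filter_upwards [self_mem_nhdsWithin] with u hu
      have hu' : t < u := hu
      exact hanti ⟨hs, by simp [hlt.ne]⟩ ⟨le_trans ht hu'.le, by simp [hu'.ne']⟩
        (le_trans hlt.le hu'.le)
    have hle : Dp t ≤ slope φ t s := le_of_tendsto tend hev
    rw [slope_def_field] at hle
    have hst : s - t < 0 := by linarith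
    rw [le_div_iff_of_neg hst] at hle
    linarith
  · simp
  · -- t < s
    have h := hconc.slope_le_of_hasDerivWithinAt_Ioi ht (le_trans ht hgt.le) hgt
      ((hDp t ht).mono Set.Ioi_subset_Ici_self)
    rw [slope_def_field] at h
    have hst : 0 < s - t := by linarith
    rw [div_le_iff₀ hst] at h
    linarith

set_option maxHeartbeats 1000000 in
/-- Gradient of a coordinatewise sum on Euclidean space. -/
lemma hasGradientAt_sum_coord {p : ℕ} (f : Fin p → ℝ → ℝ)
    (c x : EuclideanSpace ℝ (Fin p))
    (h : ∀ i, HasDerivAt (f i) (c i) (x i)) :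
    HasGradientAt (fun u : EuclideanSpace ℝ (Fin p) => ∑ i, f i (u i)) c x := by
  have hF : HasFDerivAt (fun u : EuclideanSpace ℝ (Fin p) => ∑ i, f i (u i))
      (∑ i, c i • (EuclideanSpace.proj i : EuclideanSpace ℝ (Fin p) →L[ℝ] ℝ)) x := by
    refine HasFDerivAt.fun_sum fun i _ => ?_
    have hp : HasFDerivAt (𝕜 := ℝ) (fun u : EuclideanSpace ℝ (Fin p) => u i)
        (EuclideanSpace.proj i : EuclideanSpace ℝ (Fin p) →L[ℝ] ℝ) x := by
      exact ContinuousLinearMap.hasFDerivAt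
        (EuclideanSpace.proj (𝕜 := ℝ) (ι := Fin p) i)
    exact (h i).comp_hasFDerivAt x hp
  rw [hasGradientAt_iff_hasFDerivAt]
  refine hF.congr_fderiv ?_
  ext v
  simp [InnerProductSpace.toDual_apply_apply, PiLp.inner_apply, RCLike.inner_apply,
    ContinuousLinearMap.sum_apply, mul_comm]

/-- Derivative of `t ↦ φ (t ^ 2)` using the right derivative of `φ`. -/
lemma hasDerivAt_phi_sq (φ : ℝ → ℝ) (φ' : ℝ → ℝ)
    (hderiv : ∀ t > (0:ℝ), HasDerivAt φ (φ' t) t)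
    (Dp : ℝ → ℝ) (hDp : ∀ t ≥ (0:ℝ), HasDerivWithinAt φ (Dp t) (Set.Ici t) t)
    (r : ℝ) : HasDerivAt (fun t => φ (t ^ 2)) (2 * Dp (r ^ 2) * r) r := by
  rcases eq_or_ne r 0 with rfl | hr
  · have hsq : HasDerivAt (fun t : ℝ => t ^ 2) 0 0 := by
      simpa using hasDerivAt_pow 2 (0:ℝ)
    have := (hDp 0 le_rfl).scomp_hasDerivAt_of_eq 0 hsq
      (fun x => by simpa using sq_nonneg x) (by simp)
    simpa [Function.comp_def] using this
  · have ht : (0:ℝ) < r ^ 2 := by positivity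
    have h1 : HasDerivAt φ (φ' (r ^ 2)) (r ^ 2) := hderiv _ ht
    have heq : φ' (r ^ 2) = Dp (r ^ 2) := by
      have e1 := (hDp (r ^ 2) ht.le).derivWithin
        (uniqueDiffOn_Ici (r ^ 2) _ Set.self_mem_Ici)
      have e2 := (h1.hasDerivWithinAt (s := Set.Ici (r ^ 2))).derivWithin
        (uniqueDiffOn_Ici (r ^ 2) _ Set.self_mem_Ici)
      rw [← e1, ← e2]
    have hsq : HasDerivAt (fun t : ℝ => t ^ 2) (2 * r) r := by
      simpa using hasDerivAt_pow 2 r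
    have h2 : HasDerivAt (fun t : ℝ => φ (t ^ 2)) (φ' (r ^ 2) * (2 * r)) r :=
      HasDerivAt.comp (h := fun t : ℝ => t ^ 2) r h1 hsq
    convert h2 using 1
    rw [heq]; ring

/-- Properties of the convex surrogate `ℓ^y` of the concave-of-squares loss `ℓ`:
(a) equality of values at `y` (in the shifted form), (b) equality of gradients at `Ay - b`,
and (c) global majorization. -/
theorem surrogate_value_gradient_majorization {p n : ℕ} (φ : ℝ → ℝ)
    (hcont : ContinuousOn φ (Set.Ici 0))
    (hconc : ConcaveOn ℝ (Set.Ici 0) φ)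
    (h0 : φ 0 = 0) (hnonneg : ∀ t ≥ (0:ℝ), 0 ≤ φ t)
    (φ' : ℝ → ℝ) (hderiv : ∀ t > (0:ℝ), HasDerivAt φ (φ' t) t)
    (Dp : ℝ → ℝ) (hDp : ∀ t ≥ (0:ℝ), HasDerivWithinAt φ (Dp t) (Set.Ici t) t)
    (A : Matrix (Fin p) (Fin n) ℝ) (b : Fin p → ℝ) (σ : ℝ) (y : Fin n → ℝ) :
    (∑ i, φ ((A.mulVec y - b) i ^ 2) - σ =
      ∑ i, Dp ((A.mulVec y - b) i ^ 2) * (A.mulVec y - b) i ^ 2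
        - (σ - ∑ i, φ ((A.mulVec y - b) i ^ 2)
            + ∑ i, Dp ((A.mulVec y - b) i ^ 2) * (A.mulVec y - b) i ^ 2)) ∧
    (HasGradientAt (fun u : EuclideanSpace ℝ (Fin p) => ∑ i, φ (u i ^ 2))
        ((WithLp.toLp 2 fun i => 2 * Dp ((A.mulVec y - b) i ^ 2) * (A.mulVec y - b) i :
          EuclideanSpace ℝ (Fin p)))
        ((WithLp.toLp 2 fun i => (A.mulVec y - b) i : EuclideanSpace ℝ (Fin p))) ∧
      HasGradientAt
        (fun u : EuclideanSpace ℝ (Fin p) => ∑ i, Dp ((A.mulVec y - b) i ^ 2) * u i ^ 2)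
        ((WithLp.toLp 2 fun i => 2 * Dp ((A.mulVec y - b) i ^ 2) * (A.mulVec y - b) i :
          EuclideanSpace ℝ (Fin p)))
        ((WithLp.toLp 2 fun i => (A.mulVec y - b) i : EuclideanSpace ℝ (Fin p)))) ∧
    ∀ x : Fin n → ℝ,
      ∑ i, φ ((A.mulVec x - b) i ^ 2) - σ ≤
        ∑ i, Dp ((A.mulVec y - b) i ^ 2) * (A.mulVec x - b) i ^ 2
          - (σ - ∑ i, φ ((A.mulVec y - b) i ^ 2)
              + ∑ i, Dp ((A.mulVec y - b) i ^ 2) * (A.mulVec y - b) i ^ 2) := by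
  set r : Fin p → ℝ := A.mulVec y - b with hr
  refine ⟨by ring, ⟨?_, ?_⟩, ?_⟩
  · exact hasGradientAt_sum_coord (fun i t => φ (t ^ 2)) _ _
      (fun i => hasDerivAt_phi_sq φ φ' hderiv Dp hDp (r i))
  · refine hasGradientAt_sum_coord (fun i t => Dp (r i ^ 2) * t ^ 2) _ _ (fun i => ?_)
    have := (hasDerivAt_pow 2 (r i)).const_mul (Dp (r i ^ 2))
    refine this.congr_deriv ?_
    simp; ring
  · intro x
    set q : Fin p → ℝ := A.mulVec x - b with hq
    have key : ∀ i, φ (q i ^ 2) ≤ φ (r i ^ 2) + Dp (r i ^ 2) * (q i ^ 2 - r i ^ 2) :=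
      fun i => concave_tangent_le φ hconc Dp hDp (sq_nonneg _) (sq_nonneg _)
    have hsum : ∑ i, φ (q i ^ 2) ≤
        ∑ i, (φ (r i ^ 2) + Dp (r i ^ 2) * (q i ^ 2 - r i ^ 2)) :=
      Finset.sum_le_sum fun i _ => key i
    have hexp : ∑ i, (φ (r i ^ 2) + Dp (r i ^ 2) * (q i ^ 2 - r i ^ 2)) =
        ∑ i, φ (r i ^ 2) + ∑ i, Dp (r i ^ 2) * q i ^ 2 - ∑ i, Dp (r i ^ 2) * r i ^ 2 := by
      rw [Finset.sum_add_distrib]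
      have hsplit : ∑ i, Dp (r i ^ 2) * (q i ^ 2 - r i ^ 2) =
          ∑ i, Dp (r i ^ 2) * q i ^ 2 - ∑ i, Dp (r i ^ 2) * r i ^ 2 := by
        rw [← Finset.sum_sub_distrib]
        exact Finset.sum_congr rfl fun i _ => by ring
      rw [hsplit]; ring
    linarith
end

section
/- Let $D \subseteq \mathbb{R}^n$ be a nonempty closed convex set and $B$ the closed unit ball. Define $\Theta(v) = d(v,D)^2 - 1$. Then $B + D = \{v \in \mathbb{R}^n : \Theta(v) \le 0\}$, and the normal cone of the convex set $B+D$ at a point $v$ with $\Theta(v) = 0$ is $\mathcal{N}_{B+D}(v) = \{t(v - P_D(v)) : t \ge 0\}$, where $P_D$ denotes the metric projection onto $D$; moreover $\mathcal{N}_{B+D}(v) = \{0\}$ when $\Theta(v) < 0$. -/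
open RealInnerProductSpace
open scoped Pointwise

noncomputable section

/-- The normal cone of a convex set `C` at a point `x`. -/
def normalCone {n : ℕ} (C : Set (EuclideanSpace ℝ (Fin n))) (x : EuclideanSpace ℝ (Fin n)) :
    Set (EuclideanSpace ℝ (Fin n)) :=
  {v | ∀ y ∈ C, ⟪v, y - x⟫ ≤ 0}

lemma proj_inner_le {n : ℕ} {D : Set (EuclideanSpace ℝ (Fin n))}
    (hDconv : Convex ℝ D) {v p : EuclideanSpace ℝ (Fin n)} (hp : p ∈ D)
    (hd : ‖v - p‖ = Metric.infDist v D) :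
    ∀ d ∈ D, ⟪v - p, d - p⟫ ≤ 0 := by
  have h : ‖v - p‖ = ⨅ w : D, ‖v - w‖ := by
    rw [hd, Metric.infDist_eq_iInf]
    exact iInf_congr fun y => dist_eq_norm v y
  exact (norm_eq_iInf_iff_real_inner_le_zero hDconv hp).1 h

/-- Description of the Minkowski sum `B + D` as a sublevel set of
`Θ(v) = d(v,D)² - 1`, and of its normal cone via the metric projection onto `D`. -/
theorem ball_plus_convex_normal_cone {n : ℕ}
    (D : Set (EuclideanSpace ℝ (Fin n)))
    (hDne : D.Nonempty) (hDcl : IsClosed D) (hDconv : Convex ℝ D)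
    (P : EuclideanSpace ℝ (Fin n) → EuclideanSpace ℝ (Fin n))
    (hP : ∀ v, P v ∈ D ∧ ‖v - P v‖ = Metric.infDist v D) :
    (Metric.closedBall (0 : EuclideanSpace ℝ (Fin n)) 1 + D =
      {v | Metric.infDist v D ^ 2 - 1 ≤ 0}) ∧
    (∀ v, Metric.infDist v D ^ 2 - 1 = 0 →
      normalCone (Metric.closedBall (0 : EuclideanSpace ℝ (Fin n)) 1 + D) v =
        {w | ∃ t : ℝ, 0 ≤ t ∧ w = t • (v - P v)}) ∧
    (∀ v, Metric.infDist v D ^ 2 - 1 < 0 →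
      normalCone (Metric.closedBall (0 : EuclideanSpace ℝ (Fin n)) 1 + D) v = {0}) := by
  have hset : Metric.closedBall (0 : EuclideanSpace ℝ (Fin n)) 1 + D =
      {v | Metric.infDist v D ^ 2 - 1 ≤ 0} := by
    ext v
    constructor
    · rintro ⟨b, hb, d, hd, rfl⟩
      simp only [Metric.mem_closedBall, dist_zero_right] at hb
      have h1 : Metric.infDist (b + d) D ≤ ‖b‖ := by
        have := Metric.infDist_le_dist_of_mem (x := b + d) hd
        rwa [dist_eq_norm, add_sub_cancel_right] at this
      have h0 : 0 ≤ Metric.infDist (b + d) D := Metric.infDist_nonneg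
      simp only [Set.mem_setOf_eq]
      nlinarith
    · intro hv
      simp only [Set.mem_setOf_eq] at hv
      have h0 : 0 ≤ Metric.infDist v D := Metric.infDist_nonneg
      have h1 : Metric.infDist v D ≤ 1 := by nlinarith
      refine ⟨v - P v, ?_, P v, (hP v).1, sub_add_cancel v (P v)⟩
      simp only [Metric.mem_closedBall, dist_zero_right]
      rw [(hP v).2]; exact h1
  refine ⟨hset, ?_, ?_⟩
  · intro v hv
    have hnorm : ‖v - P v‖ = 1 := by
      rw [(hP v).2]
      have h0 : 0 ≤ Metric.infDist v D := Metric.infDist_nonneg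
      nlinarith
    ext w
    simp only [normalCone, Set.mem_setOf_eq]
    constructor
    · intro hw
      by_cases hw0 : w = 0
      · exact ⟨0, le_refl 0, by simp [hw0]⟩
      refine ⟨‖w‖, norm_nonneg w, ?_⟩
      have hwnorm : (0:ℝ) < ‖w‖ := norm_pos_iff.2 hw0
      -- take y = ‖w‖⁻¹ • w + P v ∈ B + D
      have hy : (‖w‖⁻¹ • w + P v) ∈
          Metric.closedBall (0 : EuclideanSpace ℝ (Fin n)) 1 + D := by
        refine ⟨‖w‖⁻¹ • w, ?_, P v, (hP v).1, rfl⟩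
        simp only [Metric.mem_closedBall, dist_zero_right, norm_smul, norm_inv, norm_norm]
        rw [inv_mul_cancel₀ (ne_of_gt hwnorm)]
      have h1 := hw _ hy
      have h2 : ⟪w, ‖w‖⁻¹ • w + P v - v⟫ = ‖w‖⁻¹ * ‖w‖^2 - ⟪w, v - P v⟫ := by
        rw [show ‖w‖⁻¹ • w + P v - v = ‖w‖⁻¹ • w - (v - P v) by abel,
          inner_sub_right, inner_smul_right, real_inner_self_eq_norm_sq]
      rw [h2] at h1
      have h3 : ‖w‖ ≤ ⟪w, v - P v⟫ := by
        have : ‖w‖⁻¹ * ‖w‖^2 = ‖w‖ := by field_simp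
        linarith [this ▸ h1]
      have h4 : ⟪w, v - P v⟫ ≤ ‖w‖ * ‖v - P v‖ := real_inner_le_norm w (v - P v)
      have h5 : ⟪w, v - P v⟫ = ‖w‖ * ‖v - P v‖ := le_antisymm h4 (by rw [hnorm]; simpa using h3)
      have h6 := inner_eq_norm_mul_iff_real.1 h5
      rw [hnorm, one_smul] at h6
      exact h6
    · rintro ⟨t, ht, rfl⟩
      rintro y ⟨b, hb, d, hd, rfl⟩
      simp only [Metric.mem_closedBall, dist_zero_right] at hb
      have hin : ⟪v - P v, d - P v⟫ ≤ 0 := proj_inner_le hDconv (hP v).1 (hP v).2 d hd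
      have hexp : ⟪(v - P v : EuclideanSpace ℝ (Fin n)), b + d - v⟫ =
          ⟪v - P v, b⟫ + ⟪v - P v, d - P v⟫ - ‖v - P v‖^2 := by
        rw [show (b + d - v : EuclideanSpace ℝ (Fin n)) = b + (d - P v) - (v - P v) by abel,
          inner_sub_right, inner_add_right, real_inner_self_eq_norm_sq]
      have hcs : ⟪(v - P v : EuclideanSpace ℝ (Fin n)), b⟫ ≤ ‖v - P v‖ * ‖b‖ :=
        real_inner_le_norm _ _
      rw [inner_smul_left, RCLike.conj_to_real]
      have : ⟪(v - P v : EuclideanSpace ℝ (Fin n)), b + d - v⟫ ≤ 0 := by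
        rw [hexp, hnorm]
        nlinarith
      exact mul_nonpos_of_nonneg_of_nonpos ht this
  · intro v hv
    ext w
    simp only [normalCone, Set.mem_setOf_eq, Set.mem_singleton_iff]
    constructor
    · intro hw
      by_contra hw0
      have hwnorm : (0:ℝ) < ‖w‖ := norm_pos_iff.2 hw0
      have h0 : 0 ≤ Metric.infDist v D := Metric.infDist_nonneg
      have hlt : Metric.infDist v D < 1 := by nlinarith
      set ε : ℝ := (1 - Metric.infDist v D) / ‖w‖ with hε
      have hεpos : 0 < ε := div_pos (by linarith) hwnorm
      have hy : v + ε • w ∈ Metric.closedBall (0 : EuclideanSpace ℝ (Fin n)) 1 + D := by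
        rw [hset]
        have h1 : Metric.infDist (v + ε • w) D ≤ Metric.infDist v D + dist (v + ε • w) v :=
          Metric.infDist_le_infDist_add_dist
        have h2 : dist (v + ε • w) v = ε * ‖w‖ := by
          rw [dist_eq_norm, add_sub_cancel_left, norm_smul, Real.norm_eq_abs,
            abs_of_pos hεpos]
        have h3 : ε * ‖w‖ = 1 - Metric.infDist v D := by
          rw [hε]; field_simp
        have h4 : Metric.infDist (v + ε • w) D ≤ 1 := by rw [h2, h3] at h1; linarith
        have h5 : 0 ≤ Metric.infDist (v + ε • w) D := Metric.infDist_nonneg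
        simp only [Set.mem_setOf_eq]
        nlinarith
      have := hw _ hy
      rw [add_sub_cancel_left, inner_smul_right, real_inner_self_eq_norm_sq] at this
      have hpos : 0 < ε * ‖w‖ ^ 2 := by positivity
      linarith
    · rintro rfl
      intro y _
      simp
end
end

section
/- Let $\varphi:[0,\infty)\to[0,\infty)$ be continuous, concave with $\varphi(0)=0$ and positive derivative on $(0,\infty)$, let $A \in \mathbb{R}^{p\times n}$, $b \in \mathbb{R}^p$, $\sigma > 0$, and let $C \subseteq \mathbb{R}^n$ be convex with some $\hat x \in C$ satisfying $A\hat x = b$. Set $\ell(u) = \sum_{i=1}^p\varphi(u_i^2)$. Then for any $y \in C$ with $\ell(Ay-b) \le \sigma$, the implication holds: if $\lambda \ge 0$, $\lambda(\ell(Ay-b)-\sigma) = 0$ and $-\lambda A^T\nabla\ell(Ay-b) \in \mathcal{N}_C(y)$, then $\lambda = 0$. -/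
open RealInnerProductSpace

noncomputable section

/-- MFCQ for the structured nonconvex constraint `ℓ(Ax - b) ≤ σ` with
`ℓ(u) = ∑ φ(uᵢ²)` under strong strict feasibility (`A x̂ = b` for some `x̂ ∈ C`). -/
theorem structured_constraint_MFCQ {p n : ℕ} (φ : ℝ → ℝ)
    (hcont : ContinuousOn φ (Set.Ici 0))
    (hconc : ConcaveOn ℝ (Set.Ici 0) φ)
    (h0 : φ 0 = 0) (hnonneg : ∀ t ≥ (0:ℝ), 0 ≤ φ t)
    (φ' : ℝ → ℝ) (hderiv : ∀ t > (0:ℝ), HasDerivAt φ (φ' t) t)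
    (hpos : ∀ t > (0:ℝ), 0 < φ' t)
    (Dp : ℝ → ℝ) (hDp : ∀ t ≥ (0:ℝ), HasDerivWithinAt φ (Dp t) (Set.Ici t) t)
    (A : Matrix (Fin p) (Fin n) ℝ) (b : Fin p → ℝ) (σ : ℝ) (hσ : 0 < σ)
    (C : Set (EuclideanSpace ℝ (Fin n))) (hCconv : Convex ℝ C)
    (xhat : EuclideanSpace ℝ (Fin n)) (hxhatC : xhat ∈ C)
    (hxhat : A.mulVec xhat = b)
    (y : EuclideanSpace ℝ (Fin n)) (hyC : y ∈ C)
    (hyfeas : ∑ i, φ ((A.mulVec y - b) i ^ 2) ≤ σ)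
    (lam : ℝ) (hlam : 0 ≤ lam)
    (hcomp : lam * ((∑ i, φ ((A.mulVec y - b) i ^ 2)) - σ) = 0)
    (hnc : -(lam • ((WithLp.toLp 2 (A.transpose.mulVec
        (fun i => 2 * Dp ((A.mulVec y - b) i ^ 2) * (A.mulVec y - b) i)) :
        EuclideanSpace ℝ (Fin n)))) ∈ normalCone C y) :
    lam = 0 := by
  rcases eq_or_lt_of_le hlam with h | hlam'
  · exact h.symm
  exfalso
  set u : Fin p → ℝ := fun i => (A.mulVec y - b) i with hu
  have hsum : ∑ i, φ (u i ^ 2) = σ := by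
    rcases mul_eq_zero.mp hcomp with h | h
    · exact absurd h (ne_of_gt hlam')
    · have := sub_eq_zero.mp h; simpa [hu] using this
  have hDp_eq : ∀ t > (0:ℝ), Dp t = φ' t := by
    intro t ht
    have h1 := (hDp t ht.le).derivWithin (uniqueDiffOn_Ici t t Set.self_mem_Ici)
    have h2 := ((hderiv t ht).hasDerivWithinAt (s := Set.Ici t)).derivWithin
      (uniqueDiffOn_Ici t t Set.self_mem_Ici)
    rw [← h1, ← h2]
  obtain ⟨i0, hi0⟩ : ∃ i, 0 < φ (u i ^ 2) := by
    by_contra hcon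
    push_neg at hcon
    have : ∑ i, φ (u i ^ 2) ≤ 0 := Finset.sum_nonpos (fun i _ => hcon i)
    linarith
  have hui0 : 0 < u i0 ^ 2 := by
    rcases (sq_nonneg (u i0)).eq_or_lt with h | h
    · rw [← h, h0] at hi0; exact absurd hi0 (lt_irrefl 0)
    · exact h
  set g : Fin p → ℝ := fun i => 2 * Dp (u i ^ 2) * u i with hg
  have hS : 0 < ∑ i, g i * u i := by
    apply Finset.sum_pos'
    · intro i _
      rcases (sq_nonneg (u i)).eq_or_lt with h | h
      · have hz : u i = 0 := by nlinarith
        simp [hg, hz]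
      · have := hpos _ h
        rw [hg]; simp only []
        rw [hDp_eq _ h]
        nlinarith
    · refine ⟨i0, Finset.mem_univ _, ?_⟩
      rw [hg]; simp only []
      rw [hDp_eq _ hui0]
      nlinarith [hpos _ hui0]
  have hineq := hnc xhat hxhatC
  simp only [normalCone, Set.mem_setOf_eq] at hineq
  simp only [PiLp.inner_apply, RCLike.inner_apply, starRingEnd_apply, star_trivial,
    PiLp.neg_apply, PiLp.smul_apply, PiLp.sub_apply, Pi.neg_apply, Pi.smul_apply, Pi.sub_apply, smul_eq_mul,
    Matrix.mulVec, dotProduct, Matrix.transpose_apply] at hineq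
  have h1 : ∀ i, ∑ j, A i j * (xhat j - y j) = -(u i) := by
    intro i
    have hx : ∑ j, A i j * xhat j = b i := by
      have := congrFun hxhat i
      simpa [Matrix.mulVec, dotProduct] using this
    have hy : u i = (∑ j, A i j * y j) - b i := by
      simp [hu, Matrix.mulVec, dotProduct]
    rw [hy]
    simp only [mul_sub]
    rw [Finset.sum_sub_distrib, hx]
    ring
  have key : ∑ j, (∑ i, A i j * g i) * (xhat j - y j) = -∑ i, g i * u i := by
    calc ∑ j, (∑ i, A i j * g i) * (xhat j - y j)
        = ∑ j, ∑ i, g i * (A i j * (xhat j - y j)) := by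
          refine Finset.sum_congr rfl fun j _ => ?_
          rw [Finset.sum_mul]
          exact Finset.sum_congr rfl fun i _ => by ring
      _ = ∑ i, ∑ j, g i * (A i j * (xhat j - y j)) := Finset.sum_comm
      _ = ∑ i, g i * ∑ j, A i j * (xhat j - y j) := by
          exact Finset.sum_congr rfl fun i _ => (Finset.mul_sum _ _ _).symm
      _ = -∑ i, g i * u i := by
          rw [← Finset.sum_neg_distrib]
          exact Finset.sum_congr rfl fun i _ => by rw [h1 i]; ring
  have e1 : ∑ j, -(lam * ∑ i, A i j * g i) * (xhat j - y j)
      = -(lam * ∑ j, (∑ i, A i j * g i) * (xhat j - y j)) := by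
    rw [Finset.mul_sum, ← Finset.sum_neg_distrib]
    exact Finset.sum_congr rfl fun j _ => by ring
  rw [show (∑ i, (xhat.ofLp i - y.ofLp i) * -(lam * ∑ i_1, A i_1 i * g i_1)) = ∑ j, -(lam * ∑ i, A i j * g i) * (xhat j - y j) from Finset.sum_congr rfl fun j _ => mul_comm _ _] at hineq
  rw [e1, key] at hineq
  nlinarith [hS, hlam']
end
end
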